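/- Let n ≥ 1, let C ⊆ ℝ^{n+1} be a strictly convex sharp convex cone, and let Γ be a subgroup of GL(n+1,ℝ) each of whose elements preserves C. Suppose Γ is virtually nilpotent (Γ contains a nilpotent subgroup of finite index) and nonelliptic: no nontrivial γ ∈ Γ satisfies γ·v = λ·v for some v ∈ C and λ > 0. Then Γ is elementary: there exists a nonzero vector p in the closure of C such that for every γ ∈ Γ there is λ > 0 with γ·p = λ·p. -/

import Mathlib

open Matrix Polynomial
open scoped Pointwise

/-- `C ⊆ ℝ^{n+1}` is a sharp convex cone: nonempty, open, convex, invariant under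
positive scaling, and its closure contains no line through the origin. -/
def IsSharpConvexCone (n : ℕ) (C : Set (Fin (n + 1) → ℝ)) : Prop :=
  C.Nonempty ∧ IsOpen C ∧ Convex ℝ C ∧
    (∀ t : ℝ, 0 < t → t • C = C) ∧
    closure C ∩ (-(closure C)) = {0}

/-- A sharp convex cone is strictly convex if the sum of any two nonzero frontier
vectors lying on different rays belongs to the open cone (∂Ω contains no segment). -/
def IsStrictlyConvexCone (n : ℕ) (C : Set (Fin (n + 1) → ℝ)) : Prop :=
  IsSharpConvexCone n C ∧
    ∀ x y : Fin (n + 1) → ℝ, x ∈ frontier C → y ∈ frontier C → x ≠ 0 → y ≠ 0 →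
      (¬ ∃ t : ℝ, 0 < t ∧ y = t • x) → x + y ∈ C

/-- The matrix `A` preserves the cone `C`. -/
def PreservesCone (n : ℕ) (A : Matrix (Fin (n + 1)) (Fin (n + 1)) ℝ)
    (C : Set (Fin (n + 1) → ℝ)) : Prop :=
  A.mulVec '' C = C

/-- The multiset of complex eigenvalues (roots of the characteristic polynomial
over `ℂ`, with multiplicity) of a real square matrix. -/
noncomputable def cEigenvalues (n : ℕ) (A : Matrix (Fin (n + 1)) (Fin (n + 1)) ℝ) :
    Multiset ℂ :=
  ((A.charpoly).map (algebraMap ℝ ℂ)).roots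

section ConeLemmas

variable {n : ℕ} {C : Set (Fin (n + 1) → ℝ)}

lemma sc_smul_mem (h : IsSharpConvexCone n C) {t : ℝ} (ht : 0 < t)
    {x : Fin (n + 1) → ℝ} (hx : x ∈ C) : t • x ∈ C := by
  rw [← h.2.2.2.1 t ht]
  exact Set.smul_mem_smul_set hx

lemma sc_closure_smul_mem (h : IsSharpConvexCone n C) {t : ℝ} (ht : 0 < t)
    {x : Fin (n + 1) → ℝ} (hx : x ∈ closure C) : t • x ∈ closure C := by
  have h1 : t • x ∈ (fun y : Fin (n + 1) → ℝ => t • y) '' closure C :=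
    ⟨x, hx, rfl⟩
  have h2 := image_closure_subset_closure_image
    (f := fun y : Fin (n + 1) → ℝ => t • y) (s := C) (continuous_const_smul t)
  have h3 : (fun y : Fin (n + 1) → ℝ => t • y) '' C = C := by
    rw [Set.image_smul, h.2.2.2.1 t ht]
  exact h3 ▸ h2 h1

lemma sc_zero_not_mem (h : IsSharpConvexCone n C) : (0 : Fin (n + 1) → ℝ) ∉ C := by
  intro h0
  obtain ⟨ε, hε, hball⟩ := Metric.isOpen_iff.1 h.2.1 0 h0
  set e : Fin (n + 1) → ℝ := Pi.single 0 1 with he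
  have hene : e ≠ 0 := by
    intro hc
    have := congrFun hc 0
    simp [he] at this
  set w : Fin (n + 1) → ℝ := (ε / (2 * (‖e‖ + 1))) • e with hw
  have hcoef : 0 < ε / (2 * (‖e‖ + 1)) := by positivity
  have hwne : w ≠ 0 := smul_ne_zero hcoef.ne' hene
  have hwnorm : ‖w‖ < ε := by
    rw [hw, norm_smul, Real.norm_eq_abs, abs_of_pos hcoef]
    rw [div_mul_eq_mul_div, div_lt_iff₀ (by positivity)]
    nlinarith [norm_nonneg e]
  have hwC : w ∈ C := hball (by simpa [Metric.mem_ball, dist_zero_right] using hwnorm)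
  have hwC' : -w ∈ C := by
    have : ‖-w‖ < ε := by rwa [norm_neg]
    exact hball (by simpa [Metric.mem_ball, dist_zero_right] using this)
  have : w ∈ closure C ∩ (-(closure C)) := by
    refine ⟨subset_closure hwC, ?_⟩
    rw [Set.mem_neg]
    exact subset_closure hwC'
  rw [h.2.2.2.2] at this
  exact hwne this

lemma sc_zero_mem_closure (h : IsSharpConvexCone n C) :
    (0 : Fin (n + 1) → ℝ) ∈ closure C := by
  obtain ⟨v₀, hv₀⟩ := h.1
  have htend : Filter.Tendsto (fun m : ℕ => (1 / (m + 1) : ℝ) • v₀)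
      Filter.atTop (nhds 0) := by
    have := (tendsto_one_div_add_atTop_nhds_zero_nat (𝕜 := ℝ)).smul_const v₀
    simpa using this
  exact mem_closure_of_tendsto htend
    (Filter.Eventually.of_forall fun m =>
      sc_smul_mem h (by positivity) hv₀)

lemma sc_add_mem_closure_right (h : IsSharpConvexCone n C)
    {x y : Fin (n + 1) → ℝ} (hx : x ∈ C) (hy : y ∈ closure C) : x + y ∈ C := by
  have hmid : (1/2 : ℝ) • x + (1/2 : ℝ) • y ∈ interior C := by
    apply h.2.2.1.combo_interior_closure_mem_interior _ hy (by norm_num)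
      (by norm_num) (by norm_num)
    rwa [h.2.1.interior_eq]
  have hmid' : (1/2 : ℝ) • x + (1/2 : ℝ) • y ∈ C := by
    rwa [h.2.1.interior_eq] at hmid
  have := sc_smul_mem h (t := 2) (by norm_num) hmid'
  rwa [smul_add, smul_smul, smul_smul, show (2 : ℝ) * (1/2) = 1 by norm_num,
    one_smul, one_smul] at this

lemma sc_add_mem (h : IsSharpConvexCone n C)
    {x y : Fin (n + 1) → ℝ} (hx : x ∈ C) (hy : y ∈ C) : x + y ∈ C :=
  sc_add_mem_closure_right h hx (subset_closure hy)

lemma sc_closure_add_mem (h : IsSharpConvexCone n C)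
    {x y : Fin (n + 1) → ℝ} (hx : x ∈ closure C) (hy : y ∈ closure C) :
    x + y ∈ closure C := by
  have hmid : (1/2 : ℝ) • x + (1/2 : ℝ) • y ∈ closure C :=
    (h.2.2.1.closure) hx hy (by norm_num) (by norm_num) (by norm_num)
  have := sc_closure_smul_mem h (t := 2) (by norm_num) hmid
  rwa [smul_add, smul_smul, smul_smul, show (2 : ℝ) * (1/2) = 1 by norm_num,
    one_smul, one_smul] at this

lemma sc_sum_closure (h : IsSharpConvexCone n C) {ι : Type*} (F : Finset ι)
    (f : ι → (Fin (n + 1) → ℝ)) (hf : ∀ i ∈ F, f i ∈ closure C) :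
    ∑ i ∈ F, f i ∈ closure C := by
  classical
  induction F using Finset.induction_on with
  | empty => simpa using sc_zero_mem_closure h
  | insert a s hni ih =>
    rw [Finset.sum_insert hni]
    exact sc_closure_add_mem h (hf a (Finset.mem_insert_self a s))
      (ih fun i hi => hf i (Finset.mem_insert_of_mem hi))

lemma sc_pos_coeff (h : IsSharpConvexCone n C) {p : Fin (n + 1) → ℝ}
    (hp : p ∈ closure C) {l : ℝ} (hlp : l • p ∈ closure C)
    (hlp0 : l • p ≠ 0) : 0 < l := by
  have hl0 : l ≠ 0 := by rintro rfl; simp at hlp0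
  rcases hl0.lt_or_gt with hneg | hpos
  · exfalso
    have hmem : l • p ∈ closure C ∩ (-(closure C)) := by
      refine ⟨hlp, ?_⟩
      rw [Set.mem_neg]
      have : -(l • p) = (-l) • p := by rw [neg_smul]
      rw [this]
      exact sc_closure_smul_mem h (by linarith) hp
    rw [h.2.2.2.2] at hmem
    exact hlp0 hmem
  · exact hpos

lemma sc_frontier_mem (h : IsSharpConvexCone n C) {x : Fin (n + 1) → ℝ}
    (hx : x ∈ closure C) (hx' : x ∉ C) : x ∈ frontier C := by
  rw [h.2.1.frontier_eq]
  exact ⟨hx, hx'⟩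

lemma sc_exists_delta (hO : IsOpen C) {w : Fin (n + 1) → ℝ} (hw : w ∈ C)
    (d : Fin (n + 1) → ℝ) : ∃ δ : ℝ, 0 < δ ∧ w - δ • d ∈ C := by
  obtain ⟨ε, hε, hball⟩ := Metric.isOpen_iff.1 hO w hw
  refine ⟨ε / (2 * (‖d‖ + 1)), by positivity, ?_⟩
  apply hball
  rw [Metric.mem_ball, dist_eq_norm]
  have : w - (ε / (2 * (‖d‖ + 1))) • d - w = -((ε / (2 * (‖d‖ + 1))) • d) := by abel
  rw [this, norm_neg, norm_smul, Real.norm_eq_abs,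
    abs_of_pos (by positivity : (0:ℝ) < ε / (2 * (‖d‖ + 1)))]
  rw [div_mul_eq_mul_div, div_lt_iff₀ (by positivity)]
  nlinarith [norm_nonneg d]

end ConeLemmas

section Functional

variable {n : ℕ} {C : Set (Fin (n + 1) → ℝ)}

lemma sc_pos_functional (h : IsSharpConvexCone n C) :
    ∃ φ : (Fin (n + 1) → ℝ) →L[ℝ] ℝ,
      (∀ x ∈ closure C, 0 ≤ φ x) ∧ (∀ x ∈ closure C, x ≠ 0 → 0 < φ x) := by
  classical
  -- pointwise positive functionals
  have hψ : ∀ x : Fin (n + 1) → ℝ, x ∈ closure C → x ≠ 0 →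
      ∃ ψ : (Fin (n + 1) → ℝ) →L[ℝ] ℝ, (∀ a ∈ closure C, 0 ≤ ψ a) ∧ 0 < ψ x := by
    intro x hx hx0
    have hnx : -x ∉ closure C := by
      intro hc
      have : x ∈ closure C ∩ (-(closure C)) := ⟨hx, by rwa [Set.mem_neg]⟩
      rw [h.2.2.2.2] at this
      exact hx0 this
    obtain ⟨f, u, hfu, hu⟩ :=
      geometric_hahn_banach_closed_point (h.2.2.1.closure) isClosed_closure hnx
    have hzero : (0 : ℝ) < u := by
      have := hfu 0 (sc_zero_mem_closure h)
      simpa using this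
    have hf_nonpos : ∀ a ∈ closure C, f a ≤ 0 := by
      intro a ha
      by_contra hpos
      push_neg at hpos
      have ht : 0 < max 1 ((u + 1) / f a) := lt_of_lt_of_le one_pos (le_max_left _ _)
      have hmem := sc_closure_smul_mem h ht ha
      have := hfu _ hmem
      rw [_root_.map_smul, smul_eq_mul] at this
      have h2 : (u + 1) / f a * f a ≤ max 1 ((u + 1) / f a) * f a :=
        mul_le_mul_of_nonneg_right (le_max_right _ _) hpos.le
      rw [div_mul_cancel₀ _ hpos.ne'] at h2
      linarith
    refine ⟨-f, fun a ha => ?_, ?_⟩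
    · simp only [ContinuousLinearMap.neg_apply, neg_nonneg]
      exact hf_nonpos a ha
    · simp only [ContinuousLinearMap.neg_apply]
      have : f (-x) = -f x := by rw [map_neg]
      linarith [hu, this ▸ hu]
  -- compact unit cross-section
  set K : Set (Fin (n + 1) → ℝ) := closure C ∩ Metric.sphere 0 1 with hK
  have hKc : IsCompact K :=
    (isCompact_sphere (0 : Fin (n + 1) → ℝ) 1).of_isClosed_subset
      (isClosed_closure.inter Metric.isClosed_sphere) Set.inter_subset_right
  have hKne0 : ∀ x ∈ K, x ≠ 0 := by
    intro x hx h0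
    have := hx.2
    rw [mem_sphere_zero_iff_norm, h0] at this
    simpa using this
  have hψ' : ∀ i : K, ∃ ψ : (Fin (n + 1) → ℝ) →L[ℝ] ℝ,
      (∀ a ∈ closure C, 0 ≤ ψ a) ∧ 0 < ψ i :=
    fun i => hψ i.1 i.2.1 (hKne0 i.1 i.2)
  choose Ψ hΨ0 hΨp using hψ'
  have hcover : K ⊆ ⋃ i : K, {a | 0 < Ψ i a} := by
    intro y hy
    exact Set.mem_iUnion.2 ⟨⟨y, hy⟩, hΨp ⟨y, hy⟩⟩
  obtain ⟨tF, htF⟩ := hKc.elim_finite_subcover (fun i : K => {a | 0 < Ψ i a})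
    (fun i => isOpen_lt continuous_const (Ψ i).continuous) hcover
  set φ : (Fin (n + 1) → ℝ) →L[ℝ] ℝ := ∑ i ∈ tF, Ψ i with hφ
  have hφnonneg : ∀ x ∈ closure C, 0 ≤ φ x := by
    intro x hx
    rw [hφ, ContinuousLinearMap.sum_apply]
    exact Finset.sum_nonneg fun i _ => hΨ0 i x hx
  have hφposK : ∀ y ∈ K, 0 < φ y := by
    intro y hy
    obtain ⟨i, hi, hyi⟩ := Set.mem_iUnion₂.1 (htF hy)
    rw [hφ, ContinuousLinearMap.sum_apply]
    exact Finset.sum_pos' (fun j _ => hΨ0 j y hy.1) ⟨i, hi, hyi⟩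
  refine ⟨φ, hφnonneg, fun x hx hx0 => ?_⟩
  have hnx : (0:ℝ) < ‖x‖ := norm_pos_iff.2 hx0
  have hyK : ‖x‖⁻¹ • x ∈ K := by
    refine ⟨sc_closure_smul_mem h (inv_pos.2 hnx) hx, ?_⟩
    rw [mem_sphere_zero_iff_norm]
    exact norm_smul_inv_norm hx0
  have := hφposK _ hyK
  rw [_root_.map_smul, smul_eq_mul] at this
  nlinarith [inv_pos.2 hnx]

end Functional

section Perron

variable {n : ℕ} {C : Set (Fin (n + 1) → ℝ)}

lemma mv_closure {A : Matrix (Fin (n + 1)) (Fin (n + 1)) ℝ}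
    (hA : A.mulVec '' C = C) {x : Fin (n + 1) → ℝ} (hx : x ∈ closure C) :
    A.mulVec x ∈ closure C := by
  have hcont : Continuous fun v : Fin (n + 1) → ℝ => A.mulVec v := by
    have := A.mulVecLin.continuous_of_finiteDimensional
    exact this
  have h1 : A.mulVec x ∈ (fun v => A.mulVec v) '' closure C := ⟨x, hx, rfl⟩
  have h2 := image_closure_subset_closure_image (s := C) hcont h1
  rwa [show (fun v => A.mulVec v) '' C = C from hA] at h2

lemma sc_eig_strict_pos (h : IsSharpConvexCone n C)
    (φ : (Fin (n + 1) → ℝ) →L[ℝ] ℝ) (hφ0 : ∀ x ∈ closure C, 0 ≤ φ x)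
    (hφp : ∀ x ∈ closure C, x ≠ 0 → 0 < φ x)
    (B : (Fin (n + 1) → ℝ) →ₗ[ℝ] (Fin (n + 1) → ℝ))
    (hB : ∀ x ∈ closure C, x ≠ 0 → B x ∈ C)
    (c₁ : ℝ) (v₁ : Fin (n + 1) → ℝ) (hv₁ : v₁ ∈ closure C) (hv₁n : ‖v₁‖ = 1)
    (hv₁c : B v₁ - c₁ • v₁ ∈ closure C) :
    ∃ x, x ∈ closure C ∧ ‖x‖ = 1 ∧ ∃ r, c₁ ≤ r ∧ B x = r • x := by
  classical
  set K : Set (Fin (n + 1) → ℝ) := closure C ∩ Metric.sphere 0 1 with hKdef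
  have hKc : IsCompact K :=
    (isCompact_sphere (0 : Fin (n + 1) → ℝ) 1).of_isClosed_subset
      (isClosed_closure.inter Metric.isClosed_sphere) Set.inter_subset_right
  have hKne0 : ∀ x ∈ K, x ≠ 0 := by
    intro x hx h0
    have := hx.2
    rw [mem_sphere_zero_iff_norm, h0] at this
    simpa using this
  have hv₁K : v₁ ∈ K := ⟨hv₁, mem_sphere_zero_iff_norm.2 hv₁n⟩
  have hBcont : Continuous B := B.continuous_of_finiteDimensional
  obtain ⟨xmin, hxminK, hminOn⟩ := hKc.exists_isMinOn ⟨v₁, hv₁K⟩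
    (φ.continuous.continuousOn)
  have hmin : ∀ y ∈ K, φ xmin ≤ φ y := fun y hy => hminOn hy
  have hcK : 0 < φ xmin := hφp _ hxminK.1 (hKne0 _ hxminK)
  obtain ⟨xmax, _, hmaxOn⟩ := hKc.exists_isMaxOn ⟨v₁, hv₁K⟩
    ((φ.continuous.comp hBcont).continuousOn)
  have hmax : ∀ y ∈ K, φ (B y) ≤ φ (B xmax) := fun y hy => hmaxOn hy
  set S : Set ℝ := {l | ∃ x ∈ K, B x - l • x ∈ closure C} with hSdef
  have hSne : c₁ ∈ S := ⟨v₁, hv₁K, hv₁c⟩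
  have hSbdd : BddAbove S := by
    refine ⟨max 0 (φ (B xmax) / φ xmin), ?_⟩
    rintro l ⟨x, hxK, hxl⟩
    rcases le_or_gt l 0 with hl | hl
    · exact le_trans hl (le_max_left _ _)
    · have h1 : 0 ≤ φ (B x) - l * φ x := by
        have := hφ0 _ hxl
        rwa [map_sub, _root_.map_smul, smul_eq_mul] at this
      have h2 : l * φ xmin ≤ l * φ x :=
        mul_le_mul_of_nonneg_left (hmin x hxK) hl.le
      have h3 : φ (B x) ≤ φ (B xmax) := hmax x hxK
      have : l ≤ φ (B xmax) / φ xmin := by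
        rw [le_div_iff₀ hcK]; nlinarith
      exact le_trans this (le_max_right _ _)
  set r := sSup S with hrdef
  have hc₁r : c₁ ≤ r := le_csSup hSbdd hSne
  have happrox : ∀ m : ℕ, ∃ l, l ∈ S ∧ r - 1 / (m + 1) < l := by
    intro m
    obtain ⟨l, hlS, hl⟩ := exists_lt_of_lt_csSup ⟨c₁, hSne⟩
      (show r - 1 / (m + 1 : ℝ) < r by
        have : (0:ℝ) < 1 / (m + 1) := by positivity
        linarith)
    exact ⟨l, hlS, hl⟩
  choose l hlS hlgt using happrox
  have hlS' : ∀ m, ∃ x ∈ K, B x - l m • x ∈ closure C := hlS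
  choose x hxK hxmem using hlS'
  have hlr : ∀ m, l m ≤ r := fun m => le_csSup hSbdd ⟨x m, hxK m, hxmem m⟩
  obtain ⟨xs, hxsK, ψ, hψmono, hψtend⟩ := hKc.tendsto_subseq hxK
  have hltend : Filter.Tendsto (fun m => l (ψ m)) Filter.atTop (nhds r) := by
    have hlow : Filter.Tendsto (fun m : ℕ => r - 1 / (m + 1)) Filter.atTop (nhds r) := by
      have := tendsto_const_nhds (x := r) (f := Filter.atTop (α := ℕ)) |>.sub
        tendsto_one_div_add_atTop_nhds_zero_nat
      simpa using this
    apply tendsto_of_tendsto_of_tendsto_of_le_of_le hlow tendsto_const_nhds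
    · intro m
      have h1 : (1:ℝ) / (ψ m + 1) ≤ 1 / (m + 1) := by
        apply one_div_le_one_div_of_le (by positivity)
        have := hψmono.le_apply (x := m)
        exact_mod_cast Nat.add_le_add_right this 1
      have := hlgt (ψ m)
      linarith
    · intro m; exact hlr _
  have hmemlim : B xs - r • xs ∈ closure C := by
    have htend : Filter.Tendsto (fun m => B (x (ψ m)) - l (ψ m) • x (ψ m))
        Filter.atTop (nhds (B xs - r • xs)) :=
      ((hBcont.tendsto xs).comp hψtend).sub (hltend.smul hψtend)
    exact isClosed_closure.mem_of_tendsto htend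
      (Filter.Eventually.of_forall fun m => hxmem (ψ m))
  by_cases hy : B xs - r • xs = 0
  · exact ⟨xs, hxsK.1, mem_sphere_zero_iff_norm.1 hxsK.2, r, hc₁r,
      by rwa [sub_eq_zero] at hy⟩
  · exfalso
    set y := B xs - r • xs with hydef
    have hyC : B y ∈ C := hB y hmemlim hy
    have hBxs : B xs ∈ C := hB xs hxsK.1 (hKne0 _ hxsK)
    obtain ⟨δ, hδ, hδmem⟩ := sc_exists_delta h.2.1 hyC (B xs)
    have hnb : (0:ℝ) < ‖B xs‖ :=
      norm_pos_iff.2 (fun h0 => sc_zero_not_mem h (h0 ▸ hBxs))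
    set x' := ‖B xs‖⁻¹ • B xs with hx'def
    have hx'K : x' ∈ K :=
      ⟨sc_closure_smul_mem h (inv_pos.2 hnb) (subset_closure hBxs),
        mem_sphere_zero_iff_norm.2 (norm_smul_inv_norm (norm_pos_iff.1 hnb))⟩
    have hstep : B x' - (r + δ) • x' ∈ closure C := by
      have h1 : B (B xs) - (r + δ) • B xs = B y - δ • B xs := by
        rw [hydef, map_sub, _root_.map_smul]
        module
      have h2 : B x' - (r + δ) • x' = ‖B xs‖⁻¹ • (B (B xs) - (r + δ) • B xs) := by
        rw [hx'def, _root_.map_smul]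
        module
      rw [h2, h1]
      exact subset_closure (sc_smul_mem h (inv_pos.2 hnb) hδmem)
    have : r + δ ≤ r := le_csSup hSbdd ⟨x', hx'K, hstep⟩
    linarith

lemma sc_perron (h : IsSharpConvexCone n C)
    (A : Matrix (Fin (n + 1)) (Fin (n + 1)) ℝ) (hA : A.mulVec '' C = C) :
    ∃ p : Fin (n + 1) → ℝ, p ∈ closure C ∧ ‖p‖ = 1 ∧
      ∃ r : ℝ, 0 < r ∧ A.mulVec p = r • p := by
  classical
  obtain ⟨v₀, hv₀⟩ := h.1
  have hv₀ne : v₀ ≠ 0 := fun h0 => sc_zero_not_mem h (h0 ▸ hv₀)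
  set v₁ := ‖v₀‖⁻¹ • v₀ with hv₁def
  have hv₁C : v₁ ∈ C := sc_smul_mem h (inv_pos.2 (norm_pos_iff.2 hv₀ne)) hv₀
  have hv₁n : ‖v₁‖ = 1 := norm_smul_inv_norm hv₀ne
  obtain ⟨φ, hφ0, hφp⟩ := sc_pos_functional h
  have hAcont : Continuous fun v : Fin (n + 1) → ℝ => A.mulVec v := by
    have := A.mulVecLin.continuous_of_finiteDimensional
    exact this
  have hAv₁ : A.mulVec v₁ ∈ C := by
    rw [← hA]; exact ⟨v₁, hv₁C, rfl⟩
  obtain ⟨c₁, hc₁, hc₁mem⟩ := sc_exists_delta h.2.1 hAv₁ v₁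
  set Bm : ℕ → ((Fin (n + 1) → ℝ) →ₗ[ℝ] (Fin (n + 1) → ℝ)) :=
    fun m => A.mulVecLin + ((1:ℝ) / (m + 1)) • ((φ : (Fin (n+1) → ℝ) →ₗ[ℝ] ℝ).smulRight v₁)
    with hBmdef
  have hBmApply : ∀ m x, Bm m x = A.mulVec x + ((1:ℝ) / (m + 1)) • (φ x • v₁) := by
    intro m x
    simp [hBmdef, Matrix.mulVecLin_apply]
  have hεpos : ∀ m : ℕ, (0:ℝ) < 1 / (m + 1) := fun m => by positivity
  have hBm : ∀ m, ∀ x ∈ closure C, x ≠ 0 → Bm m x ∈ C := by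
    intro m x hx hx0
    rw [hBmApply]
    rw [add_comm (A.mulVec x)]
    apply sc_add_mem_closure_right h _ (mv_closure hA hx)
    rw [smul_smul]
    exact sc_smul_mem h (mul_pos (hεpos m) (hφp x hx hx0)) hv₁C
  have hBmv₁ : ∀ m, Bm m v₁ - c₁ • v₁ ∈ closure C := by
    intro m
    rw [hBmApply, add_sub_right_comm]
    apply subset_closure
    apply sc_add_mem_closure_right h hc₁mem
    apply subset_closure
    rw [smul_smul]
    exact sc_smul_mem h (mul_pos (hεpos m) (hφp v₁ (subset_closure hv₁C)
      (fun h0 => sc_zero_not_mem h (h0 ▸ hv₁C)))) hv₁C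
  have key : ∀ m, ∃ x, x ∈ closure C ∧ ‖x‖ = 1 ∧ ∃ r, c₁ ≤ r ∧ Bm m x = r • x :=
    fun m => sc_eig_strict_pos h φ hφ0 hφp (Bm m) (hBm m) c₁ v₁
      (subset_closure hv₁C) hv₁n (hBmv₁ m)
  choose xseq hx1 hx2 rseq hr1 hr2 using key
  set K : Set (Fin (n + 1) → ℝ) := closure C ∩ Metric.sphere 0 1 with hKdef
  have hKc : IsCompact K :=
    (isCompact_sphere (0 : Fin (n + 1) → ℝ) 1).of_isClosed_subset
      (isClosed_closure.inter Metric.isClosed_sphere) Set.inter_subset_right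
  have hKne0 : ∀ x ∈ K, x ≠ 0 := by
    intro x hx h0
    have := hx.2
    rw [mem_sphere_zero_iff_norm, h0] at this
    simpa using this
  have hv₁K : v₁ ∈ K := ⟨subset_closure hv₁C, mem_sphere_zero_iff_norm.2 hv₁n⟩
  have hxK : ∀ m, xseq m ∈ K := fun m => ⟨hx1 m, mem_sphere_zero_iff_norm.2 (hx2 m)⟩
  obtain ⟨xmin, hxminK, hminOn⟩ := hKc.exists_isMinOn ⟨v₁, hv₁K⟩
    (φ.continuous.continuousOn)
  have hmin : ∀ y ∈ K, φ xmin ≤ φ y := fun y hy => hminOn hy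
  have hcK : 0 < φ xmin := hφp _ hxminK.1 (hKne0 _ hxminK)
  obtain ⟨xM, _, hMOn⟩ := hKc.exists_isMaxOn ⟨v₁, hv₁K⟩
    (((φ.continuous.comp hAcont).add (φ.continuous.mul continuous_const)).continuousOn)
  have hM : ∀ y ∈ K, φ (A.mulVec y) + φ y * φ v₁ ≤ φ (A.mulVec xM) + φ xM * φ v₁ :=
    fun y hy => hMOn hy
  set R₁ := φ (A.mulVec xM) + φ xM * φ v₁ with hR₁def
  have hφv₁ : 0 ≤ φ v₁ := hφ0 v₁ (subset_closure hv₁C)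
  have hrub : ∀ m, rseq m ≤ R₁ / φ xmin := by
    intro m
    have e1 : rseq m * φ (xseq m) = φ (Bm m (xseq m)) := by
      rw [hr2, _root_.map_smul, smul_eq_mul]
    have e2 : φ (Bm m (xseq m)) =
        φ (A.mulVec (xseq m)) + (1 / (m + 1)) * (φ (xseq m) * φ v₁) := by
      rw [hBmApply]
      rw [map_add, _root_.map_smul, _root_.map_smul, smul_eq_mul, smul_eq_mul]
    have hb1 : (1 / (m + 1) : ℝ) ≤ 1 := by
      rw [div_le_one (by positivity)]
      have : (0:ℝ) ≤ (m:ℝ) := Nat.cast_nonneg m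
      linarith
    have hφx0 : 0 ≤ φ (xseq m) := hφ0 _ (hx1 m)
    have hφxmin : φ xmin ≤ φ (xseq m) := hmin _ (hxK m)
    have hMx := hM (xseq m) (hxK m)
    have hrpos : 0 ≤ rseq m := le_trans (le_of_lt hc₁) (hr1 m)
    have h5 : rseq m * φ xmin ≤ R₁ := by
      have h6 : rseq m * φ xmin ≤ rseq m * φ (xseq m) :=
        mul_le_mul_of_nonneg_left hφxmin hrpos
      have h7 : (1 / (m + 1)) * (φ (xseq m) * φ v₁) ≤ φ (xseq m) * φ v₁ := by
        have : 0 ≤ φ (xseq m) * φ v₁ := mul_nonneg hφx0 hφv₁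
        nlinarith
      calc rseq m * φ xmin ≤ rseq m * φ (xseq m) := h6
        _ = φ (A.mulVec (xseq m)) + (1 / (m + 1)) * (φ (xseq m) * φ v₁) := by
            rw [e1, e2]
        _ ≤ φ (A.mulVec (xseq m)) + φ (xseq m) * φ v₁ := by linarith
        _ ≤ R₁ := hMx
    rw [le_div_iff₀ hcK]
    exact h5
  obtain ⟨xs, hxsK, ψ₁, hψ₁, hxtend⟩ := hKc.tendsto_subseq hxK
  obtain ⟨rs, hrsI, ψ₂, hψ₂, hrtend⟩ :=
    (isCompact_Icc (a := c₁) (b := R₁ / φ xmin)).tendsto_subseq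
      (x := fun m => rseq (ψ₁ m)) (fun m => ⟨hr1 _, hrub _⟩)
  set σ := fun m => ψ₁ (ψ₂ m) with hσdef
  have hσmono : StrictMono σ := hψ₁.comp hψ₂
  have hxtend2 : Filter.Tendsto (fun m => xseq (σ m)) Filter.atTop (nhds xs) :=
    hxtend.comp hψ₂.tendsto_atTop
  obtain ⟨xφM, _, hxφMOn⟩ := hKc.exists_isMaxOn ⟨v₁, hv₁K⟩ (φ.continuous.continuousOn)
  have hxφM : ∀ y ∈ K, φ y ≤ φ xφM := fun y hy => hxφMOn hy
  have hεterm : Filter.Tendsto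
      (fun m => Bm (σ m) (xseq (σ m)) - A.mulVec (xseq (σ m)))
      Filter.atTop (nhds 0) := by
    apply squeeze_zero_norm (a := fun m : ℕ => 1 / (m + 1 : ℝ) * (φ xφM * ‖v₁‖))
    · intro m
      have he : Bm (σ m) (xseq (σ m)) - A.mulVec (xseq (σ m)) =
          ((1:ℝ) / (σ m + 1)) • (φ (xseq (σ m)) • v₁) := by
        rw [hBmApply]; abel
      rw [he, norm_smul, norm_smul, Real.norm_eq_abs, Real.norm_eq_abs,
        abs_of_pos (hεpos (σ m)), abs_of_nonneg (hφ0 _ (hx1 _))]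
      have h1 : (1:ℝ) / (σ m + 1) ≤ 1 / (m + 1) := by
        apply one_div_le_one_div_of_le (by positivity)
        have := hσmono.le_apply (x := m)
        exact_mod_cast Nat.add_le_add_right this 1
      have h2 : φ (xseq (σ m)) ≤ φ xφM := hxφM _ (hxK _)
      have h3 : 0 ≤ φ (xseq (σ m)) := hφ0 _ (hx1 _)
      have h4 : (0:ℝ) ≤ ‖v₁‖ := norm_nonneg _
      have h5 : (0:ℝ) < 1 / (m + 1 : ℝ) := by positivity
      calc 1 / (σ m + 1 : ℝ) * (φ (xseq (σ m)) * ‖v₁‖)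
          ≤ 1 / (m + 1 : ℝ) * (φ (xseq (σ m)) * ‖v₁‖) := by
            apply mul_le_mul_of_nonneg_right h1 (by positivity)
        _ ≤ 1 / (m + 1 : ℝ) * (φ xφM * ‖v₁‖) := by
            apply mul_le_mul_of_nonneg_left _ h5.le
            exact mul_le_mul_of_nonneg_right h2 h4
    · have := tendsto_one_div_add_atTop_nhds_zero_nat.mul_const (φ xφM * ‖v₁‖)
      simpa using this
  have hAtend : Filter.Tendsto (fun m => A.mulVec (xseq (σ m))) Filter.atTop
      (nhds (A.mulVec xs)) := (hAcont.tendsto xs).comp hxtend2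
  have hLHS : Filter.Tendsto (fun m => Bm (σ m) (xseq (σ m))) Filter.atTop
      (nhds (A.mulVec xs)) := by
    have := hεterm.add hAtend
    simpa using this
  have hRHS : Filter.Tendsto (fun m => Bm (σ m) (xseq (σ m))) Filter.atTop
      (nhds (rs • xs)) := by
    have h1 : Filter.Tendsto (fun m => rseq (σ m)) Filter.atTop (nhds rs) := hrtend
    have := h1.smul hxtend2
    simpa only [hr2] using this
  have heq : A.mulVec xs = rs • xs := tendsto_nhds_unique hLHS hRHS
  exact ⟨xs, hxsK.1, mem_sphere_zero_iff_norm.1 hxsK.2, rs,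
    lt_of_lt_of_le hc₁ hrsI.1, heq⟩

end Perron

section GroupLemmas

lemma center_witness (G : Type*) [Group G] [Group.IsNilpotent G] [Nontrivial G] :
    ∃ z ∈ Subgroup.center G, z ≠ 1 := by
  by_contra hcon
  push_neg at hcon
  have hcb : Subgroup.center G = ⊥ := by
    rw [Subgroup.eq_bot_iff_forall]
    exact hcon
  have hall : ∀ m : ℕ, Subgroup.upperCentralSeries G m = ⊥ := by
    intro m
    induction m with
    | zero => rfl
    | succ m ih =>
      have hle : Subgroup.upperCentralSeries G (m + 1) ≤ Subgroup.center G := by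
        intro x hx
        rw [mem_upperCentralSeries_succ_iff] at hx
        rw [Subgroup.mem_center_iff]
        intro y
        have := hx y
        rw [ih, Subgroup.mem_bot] at this
        have h1 : x * y * x⁻¹ * y⁻¹ = 1 := this
        have h2 : x * y * x⁻¹ = y := mul_inv_eq_one.1 h1
        have h3 := congrArg (fun z => z * x) h2
        simp only [inv_mul_cancel_right] at h3
        rw [h3]
      rw [hcb] at hle
      exact le_bot_iff.1 hle
  obtain ⟨m, hm⟩ := Group.IsNilpotent.nilpotent (G := G)
  obtain ⟨g, hg⟩ := exists_ne (1 : G)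
  apply hg
  have : g ∈ Subgroup.upperCentralSeries G m := hm ▸ Subgroup.mem_top g
  rw [hall m, Subgroup.mem_bot] at this
  exact this

end GroupLemmas

section SumLemma

variable {n : ℕ} {C : Set (Fin (n + 1) → ℝ)}

lemma sc_sum_range_mem (h : IsSharpConvexCone n C) :
    ∀ k : ℕ, 0 < k → ∀ f : ℕ → (Fin (n + 1) → ℝ), (∀ i, i < k → f i ∈ C) →
      ∑ i ∈ Finset.range k, f i ∈ C := by
  intro k
  induction k with
  | zero => intro hk; simp at hk
  | succ k' ih =>
    intro _ f hf
    rw [Finset.sum_range_succ]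
    rcases Nat.eq_zero_or_pos k' with rfl | hk'
    · simpa using hf 0 (by omega)
    · exact sc_add_mem h (ih hk' f fun i hi => hf i (by omega)) (hf k' (by omega))

end SumLemma

theorem virtually_nilpotent_nonelliptic_is_elementary
    (n : ℕ) (hn : 1 ≤ n) (C : Set (Fin (n + 1) → ℝ)) (hC : IsStrictlyConvexCone n C)
    (G : Subgroup (GL (Fin (n + 1)) ℝ))
    (hpres : ∀ g ∈ G, PreservesCone n (↑g) C)
    (hvn : ∃ H : Subgroup ↥G, Group.IsNilpotent ↥H ∧ H.FiniteIndex)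
    (hnonell : ∀ g ∈ G, g ≠ 1 →
      ¬ ∃ v ∈ C, ∃ l : ℝ, 0 < l ∧
        (g : Matrix (Fin (n + 1)) (Fin (n + 1)) ℝ).mulVec v = l • v) :
    ∃ p : Fin (n + 1) → ℝ, p ∈ closure C ∧ p ≠ 0 ∧
      ∀ g ∈ G, ∃ l : ℝ, 0 < l ∧
        (g : Matrix (Fin (n + 1)) (Fin (n + 1)) ℝ).mulVec p = l • p := by
  classical
  obtain ⟨h, hstrict⟩ := hC
  obtain ⟨v₀, hv₀⟩ := h.1
  have hv₀ne : v₀ ≠ 0 := fun h0 => sc_zero_not_mem h (h0 ▸ hv₀)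
  set mat : ↥G →* Matrix (Fin (n + 1)) (Fin (n + 1)) ℝ :=
    (Units.coeHom (Matrix (Fin (n + 1)) (Fin (n + 1)) ℝ)).comp G.subtype with hmatdef
  have hmat : ∀ gg : ↥G, mat gg =
      ((gg : GL (Fin (n + 1)) ℝ) : Matrix (Fin (n + 1)) (Fin (n + 1)) ℝ) := fun _ => rfl
  have hpres' : ∀ gg : ↥G, (mat gg).mulVec '' C = C := fun gg => hpres _ gg.2
  have hmemC : ∀ (gg : ↥G) (x : Fin (n + 1) → ℝ), x ∈ C → (mat gg).mulVec x ∈ C := by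
    intro gg x hx
    rw [← hpres' gg]
    exact ⟨x, hx, rfl⟩
  have hmemCl : ∀ (gg : ↥G) (x : Fin (n + 1) → ℝ), x ∈ closure C →
      (mat gg).mulVec x ∈ closure C := fun gg x hx => mv_closure (hpres' gg) hx
  have hmatmulvec : ∀ (a b : ↥G) (x : Fin (n + 1) → ℝ),
      (mat a).mulVec ((mat b).mulVec x) = (mat (a * b)).mulVec x := by
    intro a b x
    rw [Matrix.mulVec_mulVec, ← _root_.map_mul]
  have hne0 : ∀ (gg : ↥G) (x : Fin (n + 1) → ℝ), x ≠ 0 → (mat gg).mulVec x ≠ 0 := by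
    intro gg x hx hcon
    apply hx
    have h2 : (mat gg⁻¹).mulVec ((mat gg).mulVec x) = (mat gg⁻¹).mulVec 0 := by
      rw [hcon]
    rw [hmatmulvec, inv_mul_cancel, _root_.map_one, Matrix.one_mulVec,
      Matrix.mulVec_zero] at h2
    exact h2
  have hfix : ∀ gg : ↥G,
      (∃ v ∈ C, ∃ l : ℝ, 0 < l ∧ (mat gg).mulVec v = l • v) → gg = 1 := by
    intro gg hex
    by_contra hne
    have hgne : (gg : GL (Fin (n + 1)) ℝ) ≠ 1 := by
      intro hcon
      apply hne
      ext
      rw [hcon]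
      rfl
    exact hnonell _ gg.2 hgne (by rwa [← hmat gg])
  obtain ⟨H, hHnil, hHfi⟩ := hvn
  haveI := hHfi
  haveI := hHnil
  set N := H.normalCore with hNdef
  haveI hNnorm : N.Normal := H.normalCore_normal
  haveI : N.FiniteIndex := Subgroup.finiteIndex_normalCore H
  by_cases hNbot : N = ⊥
  · -- `G` is finite, hence (being torsion-free) trivial
    haveI : Finite ↥G := by
      have hind := Subgroup.FiniteIndex.index_ne_zero (H := N)
      rw [hNbot, Subgroup.index_bot] at hind
      exact Nat.finite_of_card_ne_zero hind
    have htriv : ∀ gg : ↥G, gg = 1 := by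
      intro gg
      apply hfix
      set k := orderOf gg with hkdef
      have hk : 0 < k := orderOf_pos gg
      set f : ℕ → (Fin (n + 1) → ℝ) := fun i => (mat (gg ^ i)).mulVec v₀ with hfdef
      have hterm : ∀ i, f i ∈ C := fun i => hmemC _ _ hv₀
      have hshift : ∀ i, (mat gg).mulVec (f i) = f (i + 1) := by
        intro i
        simp only [hfdef]
        rw [hmatmulvec, ← pow_succ']
      have hfk : f k = f 0 := by
        simp only [hfdef]
        rw [show gg ^ k = 1 from pow_orderOf_eq_one gg, pow_zero]
      refine ⟨∑ i ∈ Finset.range k, f i,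
        sc_sum_range_mem h k hk f (fun i _ => hterm i), 1, one_pos, ?_⟩
      rw [one_smul]
      have h1 : (mat gg).mulVec (∑ i ∈ Finset.range k, f i)
          = ∑ i ∈ Finset.range k, f (i + 1) := by
        rw [show (mat gg).mulVec (∑ i ∈ Finset.range k, f i)
            = (mat gg).mulVecLin (∑ i ∈ Finset.range k, f i) from
            (Matrix.mulVecLin_apply _ _).symm]
        rw [map_sum]
        exact Finset.sum_congr rfl fun i _ => by
          rw [Matrix.mulVecLin_apply, hshift]
      rw [h1]
      have h2 := Finset.sum_range_succ' f k
      have h3 := Finset.sum_range_succ f k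
      have h4 : ∑ i ∈ Finset.range k, f (i + 1) + f 0
          = ∑ i ∈ Finset.range k, f i + f k := by rw [← h2, ← h3]
      rw [hfk] at h4
      exact add_right_cancel h4
    refine ⟨v₀, subset_closure hv₀, hv₀ne, ?_⟩
    intro g hg
    have hgg1 := htriv ⟨g, hg⟩
    have hg1 : g = 1 := by
      have := congrArg (G.subtype) hgg1
      simpa using this
    refine ⟨1, one_pos, ?_⟩
    rw [hg1, one_smul]
    simp [Matrix.one_mulVec]
  · -- `N` is a nontrivial nilpotent normal subgroup
    haveI : Nontrivial ↥N := (Subgroup.nontrivial_iff_ne_bot N).2 hNbot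
    haveI : Group.IsNilpotent ↥N :=
      nilpotent_of_mulEquiv (Subgroup.subgroupOfEquivOfLe H.normalCore_le)
    obtain ⟨z₀, hz₀c, hz₀ne⟩ := center_witness ↥N
    set z₁ : ↥G := (z₀ : ↥G) with hz₁def
    have hz₁N : z₁ ∈ N := z₀.2
    have hz₁ne : z₁ ≠ 1 := by
      intro hcon
      rw [hz₁def] at hcon
      exact hz₀ne (OneMemClass.coe_eq_one.1 hcon)
    have hz₁comm : ∀ m ∈ N, z₁ * m = m * z₁ := by
      intro m hm
      have h1 := (Subgroup.mem_center_iff.1 hz₀c) ⟨m, hm⟩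
      have hcoe := congrArg (fun x : ↥N => (x : ↥G)) h1
      simp only [Subgroup.coe_mul] at hcoe
      exact hcoe.symm
    set ZZ : ↥G → Prop := fun w => w ∈ N ∧ ∀ m ∈ N, w * m = m * w with hZZdef
    have hZZz₁ : ZZ z₁ := ⟨hz₁N, hz₁comm⟩
    have hconj : ∀ gg w : ↥G, ZZ w → ZZ (gg⁻¹ * w * gg) := by
      intro gg w hw
      constructor
      · have := hNnorm.conj_mem w hw.1 gg⁻¹
        simpa using this
      · intro m hm
        have hgm : gg * m * gg⁻¹ ∈ N := hNnorm.conj_mem m hm gg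
        have hcm := hw.2 _ hgm
        calc gg⁻¹ * w * gg * m = gg⁻¹ * (w * (gg * m * gg⁻¹)) * gg := by group
          _ = gg⁻¹ * (gg * m * gg⁻¹ * w) * gg := by rw [hcm]
          _ = m * (gg⁻¹ * w * gg) := by group
    obtain ⟨p₀, hp₀cl, hp₀n, lam, hlam, hp₀eig⟩ := sc_perron h (mat z₁) (hpres' z₁)
    have hp₀ne : p₀ ≠ 0 := by
      intro h0
      rw [h0] at hp₀n
      simpa using hp₀n
    have hU : ∀ μ : ℝ, 0 < μ → ∀ q q' : Fin (n + 1) → ℝ,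
        q ∈ closure C → q ≠ 0 → q' ∈ closure C → q' ≠ 0 →
        (mat z₁).mulVec q = μ • q → (mat z₁).mulVec q' = μ • q' →
        ∃ t : ℝ, 0 < t ∧ q' = t • q := by
      intro μ hμ q q' hq hq0 hq' hq'0 he he'
      by_contra hnot
      have hqC : q ∉ C := fun hmem => hz₁ne (hfix z₁ ⟨q, hmem, μ, hμ, he⟩)
      have hq'C : q' ∉ C := fun hmem => hz₁ne (hfix z₁ ⟨q', hmem, μ, hμ, he'⟩)
      have hsum : q + q' ∈ C :=
        hstrict q q' (sc_frontier_mem h hq hqC) (sc_frontier_mem h hq' hq'C)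
          hq0 hq'0 hnot
      apply hz₁ne
      apply hfix z₁
      refine ⟨q + q', hsum, μ, hμ, ?_⟩
      rw [Matrix.mulVec_add, he, he', smul_add]
    have hZfix : ∀ w : ↥G, ZZ w → ∃ t : ℝ, 0 < t ∧ (mat w).mulVec p₀ = t • p₀ := by
      intro w hw
      have hq' : (mat w).mulVec p₀ ∈ closure C := hmemCl w p₀ hp₀cl
      have hq'0 : (mat w).mulVec p₀ ≠ 0 := hne0 w p₀ hp₀ne
      have hcomm : z₁ * w = w * z₁ := (hw.2 z₁ hz₁N).symm
      have heig : (mat z₁).mulVec ((mat w).mulVec p₀) = lam • (mat w).mulVec p₀ := by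
        rw [hmatmulvec, hcomm, ← hmatmulvec, hp₀eig, Matrix.mulVec_smul]
      exact hU lam hlam p₀ _ hp₀cl hp₀ne hq' hq'0 hp₀eig heig
    refine ⟨p₀, hp₀cl, hp₀ne, ?_⟩
    intro g hg
    show ∃ l : ℝ, 0 < l ∧ (mat ⟨g, hg⟩).mulVec p₀ = l • p₀
    set gg : ↥G := ⟨g, hg⟩ with hggdef
    by_cases hg1 : gg = 1
    · exact ⟨1, one_pos, by rw [hg1, _root_.map_one, Matrix.one_mulVec, one_smul]⟩
    set q : ℕ → (Fin (n + 1) → ℝ) := fun i => (mat (gg ^ i)).mulVec p₀ with hqdef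
    have hqcl : ∀ i, q i ∈ closure C := fun i => hmemCl _ _ hp₀cl
    have hqne : ∀ i, q i ≠ 0 := fun i => hne0 _ _ hp₀ne
    have hT : ∀ i : ℕ, ∃ t : ℝ, 0 < t ∧ (mat z₁).mulVec (q i) = t • q i := by
      intro i
      obtain ⟨t, htpos, hw⟩ := hZfix ((gg ^ i)⁻¹ * z₁ * gg ^ i)
        (hconj (gg ^ i) z₁ hZZz₁)
      refine ⟨t, htpos, ?_⟩
      have hkey : z₁ * gg ^ i = gg ^ i * ((gg ^ i)⁻¹ * z₁ * gg ^ i) := by group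
      simp only [hqdef]
      rw [hmatmulvec, hkey, ← hmatmulvec, hw, Matrix.mulVec_smul]
    choose t ht heigq using hT
    have hfin : Set.Finite (Module.End.HasEigenvalue
        ((mat z₁).mulVecLin : Module.End ℝ (Fin (n + 1) → ℝ))) :=
      Module.End.finite_hasEigenvalue _
    have hmapsTo : Set.MapsTo t Set.univ
        {μ | Module.End.HasEigenvalue
          ((mat z₁).mulVecLin : Module.End ℝ (Fin (n + 1) → ℝ)) μ} := by
      intro i _
      exact Module.End.hasEigenvalue_of_hasEigenvector
        ⟨Module.End.mem_eigenspace_iff.2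
          (by rw [Matrix.mulVecLin_apply]; exact heigq i), hqne i⟩
    obtain ⟨i, -, j, -, hij, htij⟩ :=
      Set.infinite_univ.exists_ne_map_eq_of_mapsTo hmapsTo hfin
    have haux : ∀ i j : ℕ, i < j → t i = t j →
        ∃ k : ℕ, 1 ≤ k ∧ ∃ τ : ℝ, 0 < τ ∧ (mat (gg ^ k)).mulVec p₀ = τ • p₀ := by
      intro i j hlt hteq
      obtain ⟨s, hs, hseq⟩ := hU (t i) (ht i) (q i) (q j) (hqcl i) (hqne i)
        (hqcl j) (hqne j) (heigq i) (by rw [hteq]; exact heigq j)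
      refine ⟨j - i, by omega, s, hs, ?_⟩
      have h1 : (mat (gg ^ i)⁻¹).mulVec (q j)
          = s • (mat (gg ^ i)⁻¹).mulVec (q i) := by
        rw [hseq, Matrix.mulVec_smul]
      simp only [hqdef] at h1
      rw [hmatmulvec, hmatmulvec] at h1
      have e1 : (gg ^ i)⁻¹ * gg ^ j = gg ^ (j - i) := by
        have : gg ^ j = gg ^ i * gg ^ (j - i) := by
          rw [← pow_add]
          congr 1
          omega
        rw [this, inv_mul_cancel_left]
      have e2 : (gg ^ i)⁻¹ * gg ^ i = (1 : ↥G) := inv_mul_cancel _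
      rw [e1, e2, _root_.map_one, Matrix.one_mulVec] at h1
      exact h1
    have hPex : ∃ k : ℕ, 1 ≤ k ∧ ∃ τ : ℝ, 0 < τ ∧
        (mat (gg ^ k)).mulVec p₀ = τ • p₀ := by
      rcases hij.lt_or_gt with hlt | hlt
      · exact haux i j hlt htij
      · exact haux j i hlt htij.symm
    set k₀ := Nat.find hPex with hk₀def
    obtain ⟨hk₀1, τ, hτpos, hτeq⟩ := Nat.find_spec hPex
    rcases eq_or_lt_of_le hk₀1 with hk₀eq | hk₀2
    · rw [← hk₀eq, pow_one] at hτeq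
      exact ⟨τ, hτpos, hτeq⟩
    · exfalso
      have hq0 : q 0 = p₀ := by
        simp only [hqdef]
        rw [pow_zero, _root_.map_one, Matrix.one_mulVec]
      have hqfr : ∀ i, q i ∉ C :=
        fun i hmem => hz₁ne (hfix z₁ ⟨q i, hmem, t i, ht i, heigq i⟩)
      set c : ℝ := τ ^ (-(1 : ℝ) / k₀) with hcdef
      have hcpos : 0 < c := Real.rpow_pos_of_pos hτpos _
      have hk₀0 : (k₀ : ℝ) ≠ 0 := by
        have : 0 < k₀ := by omega
        positivity
      have hck : c ^ k₀ * τ = 1 := by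
        rw [hcdef, ← Real.rpow_natCast (τ ^ (-(1 : ℝ) / k₀)) k₀,
          ← Real.rpow_mul hτpos.le]
        rw [show -(1 : ℝ) / k₀ * (k₀ : ℝ) = -1 by field_simp]
        rw [Real.rpow_neg_one]
        exact inv_mul_cancel₀ hτpos.ne'
      set F : ℕ → (Fin (n + 1) → ℝ) := fun i => c ^ i • q i with hFdef
      have hnotmul : ¬ ∃ t' : ℝ, 0 < t' ∧ c • q 1 = t' • q 0 := by
        rintro ⟨t', ht', hteq'⟩
        refine Nat.find_min hPex (show 1 < k₀ from hk₀2) ⟨le_refl 1, c⁻¹ * t', by positivity, ?_⟩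
        rw [pow_one]
        show (mat gg).mulVec p₀ = (c⁻¹ * t') • p₀
        have hq1 : q 1 = (mat gg).mulVec p₀ := by
          simp only [hqdef]
          rw [pow_one]
        have h5 := congrArg (fun v => c⁻¹ • v) hteq'
        rw [inv_smul_smul₀ hcpos.ne', smul_smul, hq0] at h5
        rw [← hq1, h5]
      have hfr0 : q 0 ∈ frontier C := sc_frontier_mem h (hqcl 0) (hqfr 0)
      have hfr1c : c • q 1 ∈ frontier C := by
        apply sc_frontier_mem h (sc_closure_smul_mem h hcpos (hqcl 1))
        intro hmem
        apply hqfr 1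
        have := sc_smul_mem h (inv_pos.2 hcpos) hmem
        rwa [inv_smul_smul₀ hcpos.ne'] at this
      have hpart1 : q 0 + c • q 1 ∈ C :=
        hstrict _ _ hfr0 hfr1c (hqne 0) (smul_ne_zero hcpos.ne' (hqne 1)) hnotmul
      have hrest : ∑ i ∈ Finset.Ico 2 k₀, F i ∈ closure C :=
        sc_sum_closure h _ _
          (fun i _ => sc_closure_smul_mem h (pow_pos hcpos i) (hqcl i))
      have hsplit : ∑ i ∈ Finset.range 2, F i + ∑ i ∈ Finset.Ico 2 k₀, F i
          = ∑ i ∈ Finset.range k₀, F i := by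
        rw [Finset.range_eq_Ico, Finset.range_eq_Ico]
        exact Finset.sum_Ico_consecutive F (m := 0) (n := 2) (k := k₀) (by omega) (by omega)
      have h2F : ∑ i ∈ Finset.range 2, F i = q 0 + c • q 1 := by
        rw [Finset.sum_range_succ, Finset.sum_range_one]
        simp only [hFdef]
        rw [pow_zero, pow_one, one_smul]
      have hsC : ∑ i ∈ Finset.range k₀, F i ∈ C := by
        rw [← hsplit, h2F]
        exact sc_add_mem_closure_right h hpart1 hrest
      have hqsucc : ∀ i, (mat gg).mulVec (q i) = q (i + 1) := by
        intro i
        simp only [hqdef]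
        rw [hmatmulvec, ← pow_succ']
      have hFk₀ : F k₀ = F 0 := by
        simp only [hFdef]
        rw [show q k₀ = τ • p₀ from hτeq, smul_smul, hck]
        simp [hq0]
      have hsum1 : (mat gg).mulVec (∑ i ∈ Finset.range k₀, F i)
          = ∑ i ∈ Finset.range k₀, c ^ i • q (i + 1) := by
        rw [show (mat gg).mulVec (∑ i ∈ Finset.range k₀, F i)
            = (mat gg).mulVecLin (∑ i ∈ Finset.range k₀, F i) from
            (Matrix.mulVecLin_apply _ _).symm]
        rw [map_sum]
        apply Finset.sum_congr rfl
        intro i _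
        rw [Matrix.mulVecLin_apply]
        simp only [hFdef]
        rw [Matrix.mulVec_smul, hqsucc]
      have hceig : c • (mat gg).mulVec (∑ i ∈ Finset.range k₀, F i)
          = ∑ i ∈ Finset.range k₀, F i := by
        rw [hsum1, Finset.smul_sum]
        have hterm : ∀ i, c • c ^ i • q (i + 1) = F (i + 1) := by
          intro i
          simp only [hFdef]
          rw [smul_smul, ← pow_succ']
        rw [Finset.sum_congr rfl (fun i _ => hterm i)]
        have h2 := Finset.sum_range_succ' F k₀
        have h3 := Finset.sum_range_succ F k₀
        have h4 : ∑ i ∈ Finset.range k₀, F (i + 1) + F 0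
            = ∑ i ∈ Finset.range k₀, F i + F k₀ := by rw [← h2, ← h3]
        rw [hFk₀] at h4
        exact add_right_cancel h4
      have heqs : (mat gg).mulVec (∑ i ∈ Finset.range k₀, F i)
          = c⁻¹ • ∑ i ∈ Finset.range k₀, F i := by
        symm
        rw [inv_smul_eq_iff₀ hcpos.ne']
        exact hceig.symm
      exact hg1 (hfix gg ⟨_, hsC, c⁻¹, inv_pos.2 hcpos, heqs⟩)
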